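/- Let N ≥ 1, B ≥ 0, V > 0, V_T ≥ 0, W ≥ 1 and T ≥ 1 with W dividing T. For each i ∈ {1,…,N} let Q_i, a_i, b_i, a*_i, b*_i satisfy Q_i(0) = 0, Q_i(t+1) = max(Q_i(t) + a_i(t) − b_i(t), 0), and 0 ≤ a_i(t), b_i(t), a*_i(t), b*_i(t) ≤ B for t ∈ {0,…,T−1}. Let U, U* : {0,…,T−1} → ℝ, suppose the Drift-plus-Penalty property holds at every slot t < T (Σ_{i} Q_i(t)(b_i(t) − a_i(t)) + V·U(t) ≥ Σ_{i} Q_i(t)(b*_i(t) − a*_i(t)) + V·U*(t)), and suppose the comparator satisfies the V_T-window constraint Σ_{τ=t}^{t+W−1} (a*_i(τ) − b*_i(τ)) ≤ V_T for every i and every t that is a multiple of W with t + W ≤ T. Then, writing M = max_{0 ≤ t ≤ T} Σ_{i=1}^N Q_i(t), the utility regret satisfies Σ_{t=0}^{T−1} U*(t) − Σ_{t=0}^{T−1} U(t) ≤ (V_T · T · M)/(W · V) + 7·N·B²·W·T / V. -/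

import Mathlib

open Finset

/-- Utility-regret inequality for the Drift-plus-Penalty algorithm under the
`V_T`-constrained adversary model (Theorem `thm:max-general`, before optimizing the
window size `W`): writing `M` for the peak total queue length, the utility regret is
at most `V_T·T·M/(W·V) + 7NB²WT/V`. -/
theorem DPP_regret_bound_VT_constrained (N : ℕ) (hN : 1 ≤ N) (B : ℝ) (hB : 0 ≤ B)
    (V : ℝ) (hV : 0 < V) (VT : ℝ) (hVT : 0 ≤ VT)
    (W T : ℕ) (hW : 1 ≤ W) (hT : 1 ≤ T) (hWT : W ∣ T)
    (Q a b astar bstar : Fin N → ℕ → ℝ) (U Ustar : ℕ → ℝ)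
    (hQ0 : ∀ i, Q i 0 = 0)
    (hrec : ∀ i t, Q i (t + 1) = max (Q i t + a i t - b i t) 0)
    (hbnd : ∀ i, ∀ t < T, (0 ≤ a i t ∧ a i t ≤ B) ∧ (0 ≤ b i t ∧ b i t ≤ B) ∧
      (0 ≤ astar i t ∧ astar i t ≤ B) ∧ (0 ≤ bstar i t ∧ bstar i t ≤ B))
    (hDPP : ∀ t < T, (∑ i, Q i t * (b i t - a i t)) + V * U t ≥
      (∑ i, Q i t * (bstar i t - astar i t)) + V * Ustar t)
    (hwindow : ∀ t : ℕ, W ∣ t → t + W ≤ T → ∀ i,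
      (∑ τ ∈ Finset.Ico t (t + W), (astar i τ - bstar i τ)) ≤ VT)
    (M : ℝ)
    (hM : M = (Finset.range (T + 1)).sup' Finset.nonempty_range_add_one (fun t => ∑ i, Q i t)) :
    (∑ t ∈ Finset.range T, Ustar t) - (∑ t ∈ Finset.range T, U t) ≤
      VT * (T : ℝ) * M / ((W : ℝ) * V) + 7 * (N : ℝ) * B ^ 2 * (W : ℝ) * (T : ℝ) / V := by
  obtain ⟨K, hK⟩ := hWT
  -- basic facts
  have hQnn : ∀ i t, 0 ≤ Q i t := by
    intro i t
    cases t with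
    | zero => rw [hQ0]
    | succ n => rw [hrec]; exact le_max_right _ _
  have hstep : ∀ i, ∀ t < T, |Q i (t + 1) - Q i t| ≤ B := by
    intro i t ht
    obtain ⟨⟨ha0, haB⟩, ⟨hb0, hbB⟩, _⟩ := hbnd i t ht
    rw [abs_le]
    constructor
    · have h1 : Q i t + a i t - b i t ≤ Q i (t + 1) := by
        rw [hrec]; exact le_max_left _ _
      linarith
    · have h2 : Q i (t + 1) ≤ Q i t + B := by
        rw [hrec]; apply max_le
        · linarith
        · have := hQnn i t; linarith
      linarith
  -- Lipschitz over intervals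
  have hQdiff : ∀ i s t, s ≤ t → t ≤ T → |Q i t - Q i s| ≤ B * ((t - s : ℕ) : ℝ) := by
    intro i s t hst htT
    induction t, hst using Nat.le_induction with
    | base => simp
    | succ n hn ih =>
      have h1 := hstep i n (by omega)
      have h2 := ih (by omega)
      have h3 : ((n + 1 - s : ℕ) : ℝ) = ((n - s : ℕ) : ℝ) + 1 := by
        have : (n + 1 - s : ℕ) = (n - s) + 1 := by omega
        rw [this]; push_cast; ring
      rw [h3]
      calc |Q i (n + 1) - Q i s| ≤ |Q i (n + 1) - Q i n| + |Q i n - Q i s| :=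
            abs_sub_le _ _ _
        _ ≤ B + B * ((n - s : ℕ) : ℝ) := add_le_add h1 h2
        _ = B * (((n - s : ℕ) : ℝ) + 1) := by ring
  -- per-slot drift bound
  have hdrift : ∀ t < T, ∑ i, Q i (t + 1) ^ 2 ≤
      ∑ i, Q i t ^ 2 + 2 * (∑ i, Q i t * (a i t - b i t)) + N * B ^ 2 := by
    intro t ht
    have hpt : ∀ i : Fin N, Q i (t + 1) ^ 2 ≤
        Q i t ^ 2 + 2 * (Q i t * (a i t - b i t)) + B ^ 2 := by
      intro i
      obtain ⟨⟨ha0, haB⟩, ⟨hb0, hbB⟩, _⟩ := hbnd i t ht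
      have hsq : Q i (t + 1) ^ 2 ≤ (Q i t + a i t - b i t) ^ 2 := by
        rcases le_or_gt 0 (Q i t + a i t - b i t) with h | h
        · rw [hrec, max_eq_left h]
        · rw [hrec, max_eq_right h.le]
          simpa using sq_nonneg (Q i t + a i t - b i t)
      nlinarith [hQnn i t]
    calc ∑ i, Q i (t + 1) ^ 2
        ≤ ∑ i, (Q i t ^ 2 + 2 * (Q i t * (a i t - b i t)) + B ^ 2) :=
          Finset.sum_le_sum fun i _ => hpt i
      _ = ∑ i, Q i t ^ 2 + 2 * (∑ i, Q i t * (a i t - b i t)) + N * B ^ 2 := by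
          rw [Finset.sum_add_distrib, Finset.sum_add_distrib, Finset.mul_sum,
            Finset.sum_const, Finset.card_univ, Fintype.card_fin, nsmul_eq_mul]
  -- telescoping
  have htel : ∀ n ≤ T, (0 : ℝ) ≤
      2 * ∑ t ∈ Finset.range n, (∑ i, Q i t * (a i t - b i t)) + n * (N * B ^ 2) := by
    intro n hn
    have haux : ∀ n ≤ T, ∑ i, Q i n ^ 2 ≤
        2 * ∑ t ∈ Finset.range n, (∑ i, Q i t * (a i t - b i t)) + n * (N * B ^ 2) := by
      intro n hn
      induction n with
      | zero => simp [hQ0]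
      | succ m ih =>
        have h1 := hdrift m (by omega)
        have h2 := ih (by omega)
        rw [Finset.sum_range_succ]
        push_cast
        linarith
    have h3 := haux n hn
    have h4 : (0 : ℝ) ≤ ∑ i, Q i n ^ 2 := by positivity
    linarith
  -- bound on service-arrival term
  have hA : ∑ t ∈ Finset.range T, (∑ i, Q i t * (b i t - a i t)) ≤
      T * (N * B ^ 2) / 2 := by
    have h := htel T le_rfl
    have heq : ∑ t ∈ Finset.range T, (∑ i, Q i t * (b i t - a i t)) =
        - ∑ t ∈ Finset.range T, (∑ i, Q i t * (a i t - b i t)) := by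
      rw [← Finset.sum_neg_distrib]
      apply Finset.sum_congr rfl
      intro t _
      rw [← Finset.sum_neg_distrib]
      apply Finset.sum_congr rfl
      intro i _
      ring
    rw [heq]
    linarith
  -- window bound
  have hwin : ∀ k < K, ∑ t ∈ Finset.Ico (k * W) (k * W + W),
      (∑ i, Q i t * (astar i t - bstar i t)) ≤ VT * M + N * (B ^ 2 * W ^ 2) := by
    intro k hk
    have hle : k * W + W ≤ T := by
      rw [hK]
      calc k * W + W = (k + 1) * W := by ring
        _ ≤ K * W := Nat.mul_le_mul_right _ (by omega)
        _ = W * K := by ring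
    have hQsM : ∑ i, Q i (k * W) ≤ M := by
      rw [hM]
      apply Finset.le_sup' (fun t => ∑ i, Q i t)
      simp only [Finset.mem_range]
      omega
    have hper : ∀ i : Fin N, ∑ t ∈ Finset.Ico (k * W) (k * W + W),
        Q i t * (astar i t - bstar i t) ≤ Q i (k * W) * VT + B ^ 2 * W ^ 2 := by
      intro i
      have hsplit : ∑ t ∈ Finset.Ico (k * W) (k * W + W), Q i t * (astar i t - bstar i t) =
          Q i (k * W) * (∑ t ∈ Finset.Ico (k * W) (k * W + W), (astar i t - bstar i t)) +
          ∑ t ∈ Finset.Ico (k * W) (k * W + W), (Q i t - Q i (k * W)) * (astar i t - bstar i t) := by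
        rw [Finset.mul_sum, ← Finset.sum_add_distrib]
        apply Finset.sum_congr rfl
        intro t _
        ring
      rw [hsplit]
      have hwc := hwindow (k * W) (dvd_mul_left W k) hle i
      have h1 : Q i (k * W) * (∑ t ∈ Finset.Ico (k * W) (k * W + W),
          (astar i t - bstar i t)) ≤ Q i (k * W) * VT :=
        mul_le_mul_of_nonneg_left hwc (hQnn i _)
      have h2 : ∑ t ∈ Finset.Ico (k * W) (k * W + W),
          (Q i t - Q i (k * W)) * (astar i t - bstar i t) ≤ B ^ 2 * W ^ 2 := by
        have hterm : ∀ t ∈ Finset.Ico (k * W) (k * W + W),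
            (Q i t - Q i (k * W)) * (astar i t - bstar i t) ≤ B * W * B := by
          intro t htm
          rw [Finset.mem_Ico] at htm
          obtain ⟨ht1, ht2⟩ := htm
          have htT : t < T := by omega
          obtain ⟨_, _, ⟨has0, hasB⟩, ⟨hbs0, hbsB⟩⟩ := hbnd i t htT
          have hd := hQdiff i (k * W) t ht1 (by omega)
          have hd2 : |Q i t - Q i (k * W)| ≤ B * W := by
            calc |Q i t - Q i (k * W)| ≤ B * ((t - k * W : ℕ) : ℝ) := hd
              _ ≤ B * W := by
                  apply mul_le_mul_of_nonneg_left _ hB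
                  have hle2 : t - k * W ≤ W := by omega
                  exact_mod_cast hle2
          have hab : |astar i t - bstar i t| ≤ B := by
            rw [abs_le]; constructor <;> linarith
          calc (Q i t - Q i (k * W)) * (astar i t - bstar i t)
              ≤ |(Q i t - Q i (k * W)) * (astar i t - bstar i t)| := le_abs_self _
            _ = |Q i t - Q i (k * W)| * |astar i t - bstar i t| := abs_mul _ _
            _ ≤ B * W * B := by
                apply mul_le_mul hd2 hab (abs_nonneg _)
                positivity
        calc ∑ t ∈ Finset.Ico (k * W) (k * W + W),
            (Q i t - Q i (k * W)) * (astar i t - bstar i t)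
            ≤ ∑ _t ∈ Finset.Ico (k * W) (k * W + W), B * W * B :=
              Finset.sum_le_sum hterm
          _ = W * (B * W * B) := by
              have hcard : k * W + W - k * W = W := by omega
              rw [Finset.sum_const, Nat.card_Ico, hcard, nsmul_eq_mul]
          _ = B ^ 2 * W ^ 2 := by ring
      linarith
    calc ∑ t ∈ Finset.Ico (k * W) (k * W + W), (∑ i, Q i t * (astar i t - bstar i t))
        = ∑ i, ∑ t ∈ Finset.Ico (k * W) (k * W + W), Q i t * (astar i t - bstar i t) :=
          Finset.sum_comm
      _ ≤ ∑ i, (Q i (k * W) * VT + B ^ 2 * W ^ 2) := Finset.sum_le_sum fun i _ => hper i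
      _ = (∑ i, Q i (k * W)) * VT + N * (B ^ 2 * W ^ 2) := by
          rw [Finset.sum_add_distrib, ← Finset.sum_mul, Finset.sum_const,
            Finset.card_univ, Fintype.card_fin, nsmul_eq_mul]
      _ ≤ VT * M + N * (B ^ 2 * W ^ 2) := by
          have := mul_le_mul_of_nonneg_right hQsM hVT
          nlinarith [hQsM]
  -- splitting the range into windows
  have hsplitrange : ∀ (f : ℕ → ℝ) (m : ℕ),
      ∑ t ∈ Finset.range (m * W), f t =
        ∑ k ∈ Finset.range m, ∑ t ∈ Finset.Ico (k * W) (k * W + W), f t := by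
    intro f m
    induction m with
    | zero => simp
    | succ n ih =>
      rw [Finset.sum_range_succ, ← ih]
      have h1 : (n + 1) * W = n * W + W := by ring
      rw [h1, Finset.range_eq_Ico,
        ← Finset.sum_Ico_consecutive f (Nat.zero_le (n * W)) (Nat.le_add_right _ _)]
      rw [Finset.range_eq_Ico]
  -- bound on comparator term
  have hC : ∑ t ∈ Finset.range T, (∑ i, Q i t * (astar i t - bstar i t)) ≤
      K * (VT * M + N * (B ^ 2 * W ^ 2)) := by
    have hTK : T = K * W := by rw [hK]; ring
    rw [hTK, hsplitrange]
    calc ∑ k ∈ Finset.range K, ∑ t ∈ Finset.Ico (k * W) (k * W + W),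
        (∑ i, Q i t * (astar i t - bstar i t))
        ≤ ∑ _k ∈ Finset.range K, (VT * M + N * (B ^ 2 * W ^ 2)) :=
          Finset.sum_le_sum fun k hk => hwin k (Finset.mem_range.mp hk)
      _ = K * (VT * M + N * (B ^ 2 * W ^ 2)) := by
          rw [Finset.sum_const, Finset.card_range, nsmul_eq_mul]
  -- summed DPP
  have hsum : V * ((∑ t ∈ Finset.range T, Ustar t) - (∑ t ∈ Finset.range T, U t)) ≤
      (∑ t ∈ Finset.range T, (∑ i, Q i t * (b i t - a i t))) +
      (∑ t ∈ Finset.range T, (∑ i, Q i t * (astar i t - bstar i t))) := by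
    have hpt : ∀ t ∈ Finset.range T, V * Ustar t - V * U t ≤
        (∑ i, Q i t * (b i t - a i t)) + (∑ i, Q i t * (astar i t - bstar i t)) := by
      intro t htm
      have ht := Finset.mem_range.mp htm
      have h := hDPP t ht
      have heq : (∑ i, Q i t * (bstar i t - astar i t)) =
          -(∑ i, Q i t * (astar i t - bstar i t)) := by
        rw [← Finset.sum_neg_distrib]
        apply Finset.sum_congr rfl
        intro i _
        ring
      rw [heq] at h
      linarith
    calc V * ((∑ t ∈ Finset.range T, Ustar t) - (∑ t ∈ Finset.range T, U t))
        = ∑ t ∈ Finset.range T, (V * Ustar t - V * U t) := by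
          rw [Finset.sum_sub_distrib, ← Finset.mul_sum, ← Finset.mul_sum, mul_sub]
      _ ≤ ∑ t ∈ Finset.range T, ((∑ i, Q i t * (b i t - a i t)) +
            (∑ i, Q i t * (astar i t - bstar i t))) := Finset.sum_le_sum hpt
      _ = _ := Finset.sum_add_distrib
  -- combine
  have key : V * ((∑ t ∈ Finset.range T, Ustar t) - (∑ t ∈ Finset.range T, U t)) ≤
      VT * K * M + (3 / 2 : ℝ) * (N * B ^ 2 * W * T) := by
    have h1 : (K : ℝ) * (N * (B ^ 2 * W ^ 2)) = N * B ^ 2 * W * T := by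
      have : (T : ℝ) = W * K := by rw [hK]; push_cast; ring
      rw [this]; ring
    have h2 : (T : ℝ) * (N * B ^ 2) / 2 ≤ N * B ^ 2 * W * T / 2 := by
      have hW1 : (1 : ℝ) ≤ W := by exact_mod_cast hW
      have hnn : (0 : ℝ) ≤ (N : ℝ) * B ^ 2 * T := by positivity
      nlinarith [mul_nonneg hnn (sub_nonneg.mpr hW1)]
    nlinarith [hsum, hA, hC]
  -- final arithmetic
  have hWpos : (0 : ℝ) < W := by exact_mod_cast hW
  have hTW : (T : ℝ) = W * K := by rw [hK]; push_cast; ring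
  have hX : (0 : ℝ) ≤ N * B ^ 2 * W * T := by positivity
  have hrw1 : VT * (T : ℝ) * M / ((W : ℝ) * V) = VT * K * M / V := by
    rw [hTW]
    field_simp
  rw [hrw1, div_add_div _ _ (ne_of_gt hV) (ne_of_gt hV), le_div_iff₀ (by positivity)]
  nlinarith [key, hX, hV.le]
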